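/- arXiv:0907.3508 — 2 statements merged into one kernel-verified Lean document; each statement's English description precedes it below -/
import Mathlib

section
/- Let 𝕜 be a field, and let H₊ and H₋ be 𝕜-vector spaces with internal direct sum decompositions H₊ = K₊ ⊕ L₊ and H₋ = K₋ ⊕ L₋. Let D : H₊ → H₋ be a linear map with D(K₊) ⊆ K₋ and D(L₊) ⊆ L₋ whose restriction to K₊ is a bijection onto K₋, let p₊ : H₊ → L₊ be the projection onto L₊ with kernel K₊, and for α ∈ 𝕜 define D̃(α) : H₊ × L₋ → H₋ × L₊ by D̃(α)(h, l) = (D(h) + α·l, α·p₊(h)). Then for α ≠ 0 the following explicit formula gives the (unique) preimage of any (h′, l′) ∈ H₋ × L₊ under D̃(α): writing h′ = k′ + m′ with k′ ∈ K₋ and m′ ∈ L₋, the pair (h, l) with h = (D|_{K₊})⁻¹(k′) + α⁻¹·l′ ∈ H₊ and l = α⁻¹·m′ − α⁻²·D(l′) ∈ L₋ satisfies D̃(α)(h, l) = (h′, l′). (Note that D(l′) ∈ L₋ since l′ ∈ L₊ and D(L₊) ⊆ L₋.) -/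
/-- explicit inverse formula for the stabilized map `D̃(α)` when `α ≠ 0`.
Given `(h', l') ∈ Hm × Lp`, write `h' = k' + m'` with `k' ∈ Km`, `m' ∈ Lm`, and let
`k ∈ Kp` be the preimage of `k'` under the bijection `D|_{Kp} : Kp → Km`.  Then
`h = k + α⁻¹ • l'` and `l = α⁻¹ • m' - α⁻² • D l'` satisfy `D̃(α) (h, l) = (h', l')`. -/
theorem stmt1 (𝕜 : Type*) [Field 𝕜]
    (Hp Hm : Type*) [AddCommGroup Hp] [Module 𝕜 Hp] [AddCommGroup Hm] [Module 𝕜 Hm]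
    (Kp Lp : Submodule 𝕜 Hp) (Km Lm : Submodule 𝕜 Hm)
    (hplus : IsCompl Kp Lp) (hminus : IsCompl Km Lm)
    (D : Hp →ₗ[𝕜] Hm)
    (hDK : Set.BijOn D (Kp : Set Hp) (Km : Set Hm))
    (hDL : Set.MapsTo D (Lp : Set Hp) (Lm : Set Hm))
    (α : 𝕜) (hα : α ≠ 0)
    (h' : Hm) (l' : Lp)
    (k' m' : Hm) (hk' : k' ∈ Km) (hm' : m' ∈ Lm) (hsum : h' = k' + m')
    (k : Hp) (hk : k ∈ Kp) (hDk : D k = k') :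
    (fun x : Hp × Lm =>
      ((D x.1 + α • (x.2 : Hm),
        α • (Lp.linearProjOfIsCompl Kp hplus.symm x.1)) : Hm × Lp))
      (k + α⁻¹ • (l' : Hp),
       α⁻¹ • (⟨m', hm'⟩ : Lm) - (α ^ 2)⁻¹ • (⟨D l', hDL l'.2⟩ : Lm))
      = (h', l') := by
  simp only [Prod.mk.injEq]
  constructor
  · push_cast
    rw [map_add, map_smul, hDk, hsum]
    rw [smul_sub, smul_smul, smul_smul, mul_inv_cancel₀ hα, one_smul,
      sq, mul_inv, ← mul_assoc, mul_inv_cancel₀ hα, one_mul]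
    abel
  · rw [map_add, map_smul]
    have hk0 : Lp.linearProjOfIsCompl Kp hplus.symm k = 0 := by
      exact Submodule.linearProjOfIsCompl_apply_right hplus.symm ⟨k, hk⟩
    have hl0 : Lp.linearProjOfIsCompl Kp hplus.symm (l' : Hp) = l' :=
      Submodule.linearProjOfIsCompl_apply_left hplus.symm l'
    rw [hk0, hl0, zero_add, smul_smul, mul_inv_cancel₀ hα, one_smul]
end

section
/- Let 𝕜 be a field, let H₊ and H₋ be 𝕜-vector spaces with internal direct sum decompositions H₊ = P₊ ⊕ L′₊ and H₋ = P₋ ⊕ L′₋, and let D : H₊ → H₋ be a linear map. Write D in block form with components A : P₊ → P₋, B : L′₊ → P₋, C : P₊ → L′₋ (obtained by composing D with the inclusions of P₊, L′₊ and the projections onto P₋, L′₋ determined by the decompositions), and assume A is bijective. Define the subspaces K₊ = P₊, L₊ = { l − A⁻¹(B(l)) : l ∈ L′₊ }, K₋ = { p + C(A⁻¹(p)) : p ∈ P₋ }, and L₋ = L′₋. Then H₊ = K₊ ⊕ L₊ and H₋ = K₋ ⊕ L₋ are internal direct sum decompositions, D(K₊) ⊆ K₋ and D(L₊) ⊆ L₋,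 and D restricts to a bijection from K₊ onto K₋. -/
/-- the Mischenko–Fomenko block-diagonalization construction.  Given
decompositions `Hp = Pp ⊕ L′₊`, `Hm = Pm ⊕ L′₋`, a linear map `D : Hp → Hm` with block
components `A : Pp → Pm`, `B : L′₊ → Pm`, `C : Pp → L′₋`, and `A` bijective (with linear
inverse realized by the linear equivalence `e`), the subspaces
`Kp = Pp`, `Lp = { l - A⁻¹ (B l) : l ∈ L′₊ }`, `Km = { p + C (A⁻¹ p) : p ∈ Pm }`,
`Lm = L′₋` give internal direct sum decompositions `Hp = Kp ⊕ Lp`, `Hm = Km ⊕ Lm`,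
with respect to which `D` is block diagonal and restricts to a bijection `Kp → Km`. -/
theorem stmt2 (𝕜 : Type*) [Field 𝕜]
    (Hp Hm : Type*) [AddCommGroup Hp] [Module 𝕜 Hp] [AddCommGroup Hm] [Module 𝕜 Hm]
    (Pp Lp' : Submodule 𝕜 Hp) (Pm Lm' : Submodule 𝕜 Hm)
    (hplus : IsCompl Pp Lp') (hminus : IsCompl Pm Lm')
    (D : Hp →ₗ[𝕜] Hm)
    (A : Pp →ₗ[𝕜] Pm) (B : Lp' →ₗ[𝕜] Pm) (C : Pp →ₗ[𝕜] Lm')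
    (hA : A = (Pm.linearProjOfIsCompl Lm' hminus) ∘ₗ D ∘ₗ Pp.subtype)
    (hB : B = (Pm.linearProjOfIsCompl Lm' hminus) ∘ₗ D ∘ₗ Lp'.subtype)
    (hC : C = (Lm'.linearProjOfIsCompl Pm hminus.symm) ∘ₗ D ∘ₗ Pp.subtype)
    (hAbij : Function.Bijective A)
    (e : Pp ≃ₗ[𝕜] Pm) (he : (e : Pp →ₗ[𝕜] Pm) = A)
    (Kp : Submodule 𝕜 Hp) (hKp : Kp = Pp)
    (Lp : Submodule 𝕜 Hp)
    (hLp : Lp = LinearMap.range (Lp'.subtype - Pp.subtype ∘ₗ e.symm.toLinearMap ∘ₗ B))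
    (Km : Submodule 𝕜 Hm)
    (hKm : Km = LinearMap.range (Pm.subtype + Lm'.subtype ∘ₗ C ∘ₗ e.symm.toLinearMap))
    (Lm : Submodule 𝕜 Hm) (hLm : Lm = Lm') :
    IsCompl Kp Lp ∧ IsCompl Km Lm ∧
    Set.MapsTo D (Kp : Set Hp) (Km : Set Hm) ∧
    Set.MapsTo D (Lp : Set Hp) (Lm : Set Hm) ∧
    Set.BijOn D (Kp : Set Hp) (Km : Set Hm) := by

  subst hLp hKm
  rw [hKp, hLm]
  have heA : ∀ x : Pp, e x = A x := fun x => by rw [← he]; rfl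
  have hDp : ∀ x : Pp, D x = (A x : Hm) + (C x : Hm) := by
    intro x
    rw [hA, hC]
    simp only [LinearMap.comp_apply, Submodule.subtype_apply]
    exact (Submodule.projection_add_projection_eq_self hminus (D x)).symm
  have hDl : ∀ l : Lp', D l = (B l : Hm) +
      ((Lm'.projectionOnto Pm hminus.symm) (D l) : Hm) := by
    intro l
    rw [hB]
    simp only [LinearMap.comp_apply, Submodule.subtype_apply]
    exact (Submodule.projection_add_projection_eq_self hminus (D l)).symm
  set F := Lp'.subtype - Pp.subtype ∘ₗ e.symm.toLinearMap ∘ₗ B with hF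
  set G := Pm.subtype + Lm'.subtype ∘ₗ C ∘ₗ e.symm.toLinearMap with hG
  have hFapp : ∀ l : Lp', F l = (l : Hp) - ((e.symm (B l) : Pp) : Hp) := fun l => rfl
  have hGapp : ∀ p : Pm, G p = (p : Hm) + ((C (e.symm p) : Lm') : Hm) := fun p => rfl
  have hcompl1 : IsCompl Pp (LinearMap.range F) := by
    constructor
    · rw [disjoint_iff_inf_le]
      rintro x ⟨hxP, l, rfl⟩
      have h1 : (Lp'.projectionOnto Pp hplus.symm) (F l) = l := by
        rw [hFapp, map_sub, Submodule.projectionOnto_apply_left,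
          Submodule.projectionOnto_apply_right, sub_zero]
      have h2 : (Lp'.projectionOnto Pp hplus.symm) (F l) = 0 :=
        Submodule.projectionOnto_apply_right hplus.symm ⟨F l, hxP⟩
      have hl : l = 0 := by rw [← h1, h2]
      simp [hl]
    · rw [codisjoint_iff, eq_top_iff]
      intro x _
      set p := Pp.projectionOnto Lp' hplus x
      set l := Lp'.projectionOnto Pp hplus.symm x
      refine Submodule.mem_sup.2 ⟨(p : Hp) + ((e.symm (B l) : Pp) : Hp), ?_, F l, ⟨l, rfl⟩, ?_⟩
      · exact Pp.add_mem p.2 (e.symm (B l)).2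
      · rw [hFapp]
        have : (p : Hp) + (l : Hp) = x := Submodule.projection_add_projection_eq_self hplus x
        linear_combination (norm := module) this
  have hcompl2 : IsCompl (LinearMap.range G) Lm' := by
    constructor
    · rw [disjoint_iff_inf_le]
      rintro x ⟨⟨p, rfl⟩, hxL⟩
      have h1 : (Pm.projectionOnto Lm' hminus) (G p) = p := by
        rw [hGapp, map_add, Submodule.projectionOnto_apply_left,
          Submodule.projectionOnto_apply_right, add_zero]
      have h2 : (Pm.projectionOnto Lm' hminus) (G p) = 0 :=
        Submodule.projectionOnto_apply_right hminus ⟨G p, hxL⟩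
      have hp : p = 0 := by rw [← h1, h2]
      simp [hp]
    · rw [codisjoint_iff, eq_top_iff]
      intro x _
      set p := Pm.projectionOnto Lm' hminus x
      set l := Lm'.projectionOnto Pm hminus.symm x
      refine Submodule.mem_sup.2 ⟨G p, ⟨p, rfl⟩,
        (l : Hm) - ((C (e.symm p) : Lm') : Hm), Lm'.sub_mem l.2 (C (e.symm p)).2, ?_⟩
      · rw [hGapp]
        have : (p : Hm) + (l : Hm) = x := Submodule.projection_add_projection_eq_self hminus x
        linear_combination (norm := module) this
  have hmaps1 : Set.MapsTo D (Pp : Set Hp) ((LinearMap.range G : Submodule 𝕜 Hm) : Set Hm) := by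
    intro x hx
    refine ⟨A ⟨x, hx⟩, ?_⟩
    rw [hGapp]
    have h3 : e.symm (A ⟨x, hx⟩) = ⟨x, hx⟩ := by rw [← heA]; exact e.symm_apply_apply _
    rw [h3]
    exact (hDp ⟨x, hx⟩).symm
  have hmaps2 : Set.MapsTo D ((LinearMap.range F : Submodule 𝕜 Hp) : Set Hp) (Lm' : Set Hm) := by
    rintro _ ⟨l, rfl⟩
    show D (F l) ∈ Lm'
    have hAe : A (e.symm (B l)) = B l := by rw [← heA]; exact e.apply_symm_apply _
    have hDl' := hDl l
    set q := (Lm'.projectionOnto Pm hminus.symm) (D (l : Hp)) with hq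
    have : D (F l) = (q : Hm) - ((C (e.symm (B l)) : Lm') : Hm) := by
      rw [hFapp, map_sub, hDp (e.symm (B l)), hAe, hDl']
      abel
    rw [this]
    exact Lm'.sub_mem q.2 (C (e.symm (B l))).2
  refine ⟨hcompl1, hcompl2, hmaps1, hmaps2, hmaps1, ?_, ?_⟩
  · intro x hx y hy hxy
    have h1 := hDp ⟨x, hx⟩
    have h2 := hDp ⟨y, hy⟩
    rw [hxy] at h1
    have h3 : (A ⟨x, hx⟩ : Hm) + (C ⟨x, hx⟩ : Hm) = (A ⟨y, hy⟩ : Hm) + (C ⟨y, hy⟩ : Hm) := by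
      rw [← h1, ← h2]
    have h4 : A ⟨x, hx⟩ = A ⟨y, hy⟩ := by
      have := congrArg (Pm.projectionOnto Lm' hminus) h3
      simpa [map_add, Submodule.projectionOnto_apply_left,
        Submodule.projectionOnto_apply_right] using this
    have h5 : (⟨x, hx⟩ : Pp) = ⟨y, hy⟩ := hAbij.1 h4
    exact congrArg Subtype.val h5
  · rintro _ ⟨p, rfl⟩
    refine ⟨(e.symm p : Hp), (e.symm p).2, ?_⟩
    have hAe : A (e.symm p) = p := by rw [← heA]; exact e.apply_symm_apply _
    rw [show ((e.symm p : Hp)) = ((e.symm p : Pp) : Hp) from rfl, hDp (e.symm p), hAe, hGapp]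
end
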